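/- Let R, ε ∈ (0,1) with ε < 1 - R, let ℓ ≥ 2 be an integer, and let q ≥ ℓ be a prime power. There exists n_0 = n_0(ℓ, R, ε) such that for every n ≥ n_0 with Rn an integer and every linear code C ⊆ F_q^n of dimension Rn, there exist input lists S_1,…,S_n ⊆ F_q with |S_i| = ℓ for all i such that the (1-R-ε)-radius list-recovery ball B(1-R-ε, S_1×⋯×S_n) contains at least ⌈(1-R)ℓ/ε⌉ - 1 linearly independent codewords of C. -/

import Mathlib

/-- The agreement set `agr(x, S₁,…,Sₙ) = {i : xᵢ ∈ Sᵢ}`. -/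
def agr {F : Type*} [DecidableEq F] {n : ℕ} (x : Fin n → F) (S : Fin n → Finset F) :
    Finset (Fin n) :=
  Finset.univ.filter fun i => x i ∈ S i


lemma exists_small_support_subcode (F : Type) [Field F] {n : ℕ} :
    ∀ (d m : ℕ) (C : Submodule F (Fin n → F)) (s : Finset (Fin n)),
      Module.finrank F C = m + d →
      (∀ c ∈ C, ∀ i, i ∉ s → c i = 0) →
      ∃ (t : Finset (Fin n)) (W : Submodule F (Fin n → F)),
        W ≤ C ∧ m ≤ Module.finrank F W ∧
        (∀ c ∈ W, ∀ i, i ∉ t → c i = 0) ∧ t.card + d ≤ s.card := by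
  intro d
  induction d with
  | zero =>
      intro m C s h hs
      exact ⟨s, C, le_rfl, by omega, hs, by omega⟩
  | succ d ih =>
      intro m C s h hs
      have hpos : 0 < Module.finrank F C := by omega
      have : Nontrivial C := Module.finrank_pos_iff.mp hpos
      obtain ⟨x, hx⟩ := exists_ne (0 : C)
      have hxv : (x : Fin n → F) ≠ 0 := by
        simpa [Submodule.coe_eq_zero] using hx
      obtain ⟨i, hi⟩ : ∃ i, (x : Fin n → F) i ≠ 0 := by
        by_contra hcon
        push_neg at hcon
        exact hxv (funext hcon)
      have his : i ∈ s := by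
        by_contra hcon
        exact hi (hs x x.2 i hcon)
      set f : C →ₗ[F] F := (LinearMap.proj i).comp C.subtype with hf
      have hfx : f x = (x : Fin n → F) i := rfl
      have hrange : Module.finrank F (LinearMap.range f) = 1 := by
        have h1 : Module.finrank F (LinearMap.range f) ≤ 1 := by
          simpa using (LinearMap.range f).finrank_le
        have h2 : 0 < Module.finrank F (LinearMap.range f) := by
          rw [Module.finrank_pos_iff]
          exact ⟨⟨⟨f x, LinearMap.mem_range_self f x⟩, 0, by
            simp [Subtype.ext_iff, hfx, hi]⟩⟩
        omega
      have hker : Module.finrank F (LinearMap.ker f) = m + d := by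
        have := LinearMap.finrank_range_add_finrank_ker f
        rw [h, hrange] at this
        omega
      set W₀ : Submodule F (Fin n → F) := (LinearMap.ker f).map C.subtype with hW₀
      have hW₀C : W₀ ≤ C := Submodule.map_subtype_le _ _
      have hW₀rank : Module.finrank F W₀ = m + d := by
        rw [hW₀, Submodule.finrank_map_subtype_eq, hker]
      have hW₀supp : ∀ c ∈ W₀, ∀ j, j ∉ s.erase i → c j = 0 := by
        intro c hc j hj
        obtain ⟨y, hy, rfl⟩ := Submodule.mem_map.mp hc
        by_cases hji : j = i
        · subst hji
          have : f y = 0 := hy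
          simpa [hf] using this
        · have hjs : j ∉ s := by
            intro hjs
            exact hj (Finset.mem_erase.mpr ⟨hji, hjs⟩)
          exact hs _ y.2 j hjs
      obtain ⟨t, W, hWle, hWrank, hWsupp, hcard⟩ := ih m W₀ (s.erase i) hW₀rank hW₀supp
      refine ⟨t, W, hWle.trans hW₀C, hWrank, hWsupp, ?_⟩
      have : 1 ≤ s.card := Finset.card_pos.mpr ⟨i, his⟩
      rw [Finset.card_erase_of_mem his] at hcard
      omega

set_option maxHeartbeats 2000000 in
/-- Every linear code of rate `R` has a `(1-R-ε)`-radius `ℓ`-list-recovery ball containing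
at least `⌈(1-R)ℓ/ε⌉ - 1` linearly independent codewords.  Here `n₀` depends only on `ℓ`,
`R` and `ε`. -/
theorem linear_codes_many_independent_codewords_in_list_recovery_ball
    (R ε : ℝ) (hR : R ∈ Set.Ioo (0 : ℝ) 1) (hε : ε ∈ Set.Ioo (0 : ℝ) 1)
    (hcap : ε < 1 - R) (ℓ : ℕ) (hℓ : 2 ≤ ℓ) :
    ∃ n₀ : ℕ, ∀ n : ℕ, n₀ ≤ n →
      ∀ (F : Type) (_ : Field F) (_ : Fintype F) (_ : DecidableEq F),
        ℓ ≤ Fintype.card F →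
        ∀ (C : Submodule F (Fin n → F)) (k : ℕ),
          (k : ℝ) = R * (n : ℝ) → Module.finrank F C = k →
          ∃ S : Fin n → Finset F, (∀ i, (S i).card = ℓ) ∧
            ∃ T : Finset (Fin n → F),
              (↑T : Set (Fin n → F)) ⊆ (C : Set (Fin n → F)) ∧
              (∀ x ∈ T, (1 - (1 - R - ε)) * (n : ℝ) ≤ ((agr x S).card : ℝ)) ∧
              LinearIndependent F (fun x : {y // y ∈ T} => (x : Fin n → F)) ∧
              ⌈(1 - R) * (ℓ : ℝ) / ε⌉₊ - 1 ≤ T.card := by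
  obtain ⟨hR0, hR1⟩ := hR
  obtain ⟨hε0, hε1⟩ := hε
  set x₀ : ℝ := (1 - R) * (ℓ : ℝ) / ε with hxdef
  set m : ℕ := ⌈x₀⌉₊ - 1 with hmdef
  have hℓpos : (0:ℝ) < (ℓ:ℝ) := by positivity
  have hℓx : (ℓ:ℝ) < x₀ := by
    rw [hxdef, lt_div_iff₀ hε0]
    nlinarith
  have hℓceil : ℓ < ⌈x₀⌉₊ := Nat.lt_ceil.mpr hℓx
  have hℓm : ℓ ≤ m := by omega
  have hm0 : 0 < m := by omega
  have hmx : (m:ℝ) < x₀ := by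
    have h1 : (⌈x₀⌉₊:ℝ) < x₀ + 1 := Nat.ceil_lt_add_one (le_of_lt (hℓpos.trans hℓx))
    have h2 : (m:ℝ) = (⌈x₀⌉₊:ℝ) - 1 := by
      rw [hmdef, Nat.cast_sub (by omega)]
      norm_num
    linarith
  have hc : 0 < (1-R)*(ℓ:ℝ) - ε*m := by
    have := (lt_div_iff₀ hε0).mp hmx
    linarith
  set c : ℝ := (1-R)*(ℓ:ℝ) - ε*m with hcdef
  refine ⟨⌈(m:ℝ)/R⌉₊ + ⌈(m:ℝ)*m/c⌉₊ + 1, ?_⟩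
  intro n hn F instF instFt instDE hcardF C k hk hrk
  have hn1 : 1 ≤ n := by omega
  have hnR : (m:ℝ) ≤ R * n := by
    have h0 : ⌈(m:ℝ)/R⌉₊ ≤ n := by omega
    have h2 : (m:ℝ)/R ≤ (n:ℝ) := le_trans (Nat.le_ceil _) (by exact_mod_cast h0)
    rw [div_le_iff₀ hR0] at h2
    linarith [h2]
  have hnc : (m:ℝ)*m ≤ c * n := by
    have h0 : ⌈(m:ℝ)*m/c⌉₊ ≤ n := by omega
    have h2 : (m:ℝ)*m/c ≤ (n:ℝ) := le_trans (Nat.le_ceil _) (by exact_mod_cast h0)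
    rw [div_le_iff₀ hc] at h2
    linarith [h2]
  have hmk : m ≤ k := by
    have : (m:ℝ) ≤ (k:ℝ) := by rw [hk]; exact hnR
    exact_mod_cast this
  obtain ⟨t, W, hWC, hmW, hWsupp, hcard⟩ :=
    exists_small_support_subcode F (k - m) m C Finset.univ (by rw [hrk]; omega)
      (by intro c' _ i hi; exact absurd (Finset.mem_univ i) hi)
  classical
  let b := Module.finBasis F W
  let w : Fin m → (Fin n → F) := fun j => (b (Fin.castLE hmW j) : Fin n → F)
  have hw : LinearIndependent F w :=
    ((b.linearIndependent.comp (Fin.castLE hmW) (Fin.castLE_injective hmW)).map'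
      W.subtype (Submodule.ker_subtype W))
  have hwW : ∀ j, w j ∈ W := fun j => (b (Fin.castLE hmW j)).2
  have hwsupp : ∀ j, ∀ i, i ∉ t → w j i = 0 := fun j => hWsupp _ (hwW j)
  set s : ℕ := t.card with hsdef
  have hsn : s ≤ n := by simpa using t.card_le_univ
  let e : {i // i ∈ t} ≃ Fin s := t.equivFin
  let uidx : Fin n → ℕ := fun i => if h : i ∈ t then (e ⟨i, h⟩).val else 0
  let Jset : ℕ → Finset (Fin m) := fun u =>
    (Finset.range ℓ).image (fun r => (⟨(u + m - r) % m, Nat.mod_lt _ hm0⟩ : Fin m))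
  let Vals : Fin n → Finset F := fun i =>
    if i ∈ t then (Jset (uidx i)).image (fun j => w j i) else {0}
  have hValsCard : ∀ i, (Vals i).card ≤ ℓ := by
    intro i
    by_cases h : i ∈ t
    · simp only [Vals, if_pos h]
      exact le_trans (Finset.card_image_le) (le_trans Finset.card_image_le (by simp))
    · simp only [Vals, if_neg h, Finset.card_singleton]
      omega
  have hpad : ∀ i, ∃ B : Finset F, Vals i ⊆ B ∧ B.card = ℓ := fun i =>
    Finset.exists_superset_card_eq (hValsCard i) hcardF
  choose S hS1 hS2 using hpad
  -- counting: each codeword j is served on many coordinates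
  have hserve : ∀ j : Fin m, (s / m) * ℓ ≤ (t.filter (fun i => j ∈ Jset (uidx i))).card := by
    intro j
    have hcards : ((Finset.range (s/m)) ×ˢ (Finset.range ℓ)).card = (s/m) * ℓ := by
      simp
    rw [← hcards]
    set f : ℕ × ℕ → Fin n := fun p =>
      if h : p.1 * m + ((j:ℕ) + p.2) % m < s then ((e.symm ⟨_, h⟩ : {i // i ∈ t}) : Fin n)
      else ⟨0, by omega⟩ with hfdef
    apply Finset.card_le_card_of_injOn f
    · intro p hp
      simp only [Finset.coe_product, Set.mem_prod, Finset.mem_coe, Finset.mem_product, Finset.mem_range] at hp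
      obtain ⟨hp1, hp2⟩ := hp
      have hxm : ((j:ℕ) + p.2) % m < m := Nat.mod_lt _ hm0
      have hlt : p.1 * m + ((j:ℕ) + p.2) % m < s := by
        have h1 : p.1 * m + ((j:ℕ) + p.2) % m < (p.1 + 1) * m := by
          rw [add_one_mul]; omega
        have h2 : (p.1 + 1) * m ≤ (s/m) * m := Nat.mul_le_mul_right m (by omega)
        exact lt_of_lt_of_le h1 (h2.trans (Nat.div_mul_le_self s m))
      rw [hfdef]
      simp only [dif_pos hlt]
      set i : {i // i ∈ t} := e.symm ⟨p.1 * m + ((j:ℕ) + p.2) % m, hlt⟩ with hidef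
      have hit : (i : Fin n) ∈ t := i.2
      have huidx : uidx (i : Fin n) = p.1 * m + ((j:ℕ) + p.2) % m := by
        simp only [uidx, dif_pos hit]
        have : (⟨(i : Fin n), hit⟩ : {i // i ∈ t}) = i := Subtype.ext rfl
        rw [this, hidef, Equiv.apply_symm_apply]
      refine Finset.mem_filter.mpr ⟨hit, ?_⟩
      rw [huidx]
      refine Finset.mem_image.mpr ⟨p.2, Finset.mem_range.mpr hp2, ?_⟩
      apply Fin.ext
      show (p.1 * m + ((j:ℕ) + p.2) % m + m - p.2) % m = (j:ℕ)
      have hp2m : p.2 ≤ m := le_of_lt (lt_of_lt_of_le hp2 hℓm)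
      rw [Nat.add_sub_assoc hp2m]
      calc (p.1 * m + ((j:ℕ) + p.2) % m + (m - p.2)) % m
          = (((j:ℕ) + p.2) % m + (m - p.2) + p.1 * m) % m := by ring_nf
        _ = (((j:ℕ) + p.2) % m + (m - p.2)) % m := Nat.add_mul_mod_self_right _ _ _
        _ = (((j:ℕ) + p.2) + (m - p.2)) % m := Nat.mod_add_mod _ _ _
        _ = ((j:ℕ) + (p.2 + (m - p.2))) % m := by rw [add_assoc]
        _ = ((j:ℕ) + m) % m := by rw [Nat.add_sub_cancel' hp2m]
        _ = (j:ℕ) % m := Nat.add_mod_right _ _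
        _ = (j:ℕ) := Nat.mod_eq_of_lt j.2
    · intro p1 hp1 p2 hp2 hfeq
      simp only [Finset.coe_product, Set.mem_prod, Finset.mem_coe, Finset.mem_range] at hp1 hp2
      obtain ⟨h11, h12⟩ := hp1
      obtain ⟨h21, h22⟩ := hp2
      have hlt1 : p1.1 * m + ((j:ℕ) + p1.2) % m < s := by
        have h1 : p1.1 * m + ((j:ℕ) + p1.2) % m < (p1.1 + 1) * m := by
          have := Nat.mod_lt ((j:ℕ) + p1.2) hm0; rw [add_one_mul]; omega
        exact lt_of_lt_of_le h1 ((Nat.mul_le_mul_right m (by omega)).trans (Nat.div_mul_le_self s m))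
      have hlt2 : p2.1 * m + ((j:ℕ) + p2.2) % m < s := by
        have h1 : p2.1 * m + ((j:ℕ) + p2.2) % m < (p2.1 + 1) * m := by
          have := Nat.mod_lt ((j:ℕ) + p2.2) hm0; rw [add_one_mul]; omega
        exact lt_of_lt_of_le h1 ((Nat.mul_le_mul_right m (by omega)).trans (Nat.div_mul_le_self s m))
      rw [hfdef] at hfeq
      simp only [dif_pos hlt1, dif_pos hlt2] at hfeq
      have := e.symm.injective (Subtype.ext hfeq)
      have heq : p1.1 * m + ((j:ℕ) + p1.2) % m = p2.1 * m + ((j:ℕ) + p2.2) % m := by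
        have := congrArg Fin.val this
        simpa using this
      have hm1 : ((j:ℕ) + p1.2) % m < m := Nat.mod_lt _ hm0
      have hm2 : ((j:ℕ) + p2.2) % m < m := Nat.mod_lt _ hm0
      have hq : p1.1 = p2.1 := by
        have d1 : (p1.1 * m + ((j:ℕ) + p1.2) % m) / m = p1.1 := by
          rw [mul_comm, Nat.mul_add_div hm0, Nat.div_eq_of_lt hm1]; omega
        have d2 : (p2.1 * m + ((j:ℕ) + p2.2) % m) / m = p2.1 := by
          rw [mul_comm, Nat.mul_add_div hm0, Nat.div_eq_of_lt hm2]; omega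
        rw [← d1, ← d2, heq]
      have hr : ((j:ℕ) + p1.2) % m = ((j:ℕ) + p2.2) % m := by
        rw [hq] at heq; omega
      have hr' : p1.2 = p2.2 := by
        have hmod : p1.2 ≡ p2.2 [MOD m] := Nat.ModEq.add_left_cancel' (j:ℕ) hr
        have := hmod.eq_of_lt_of_lt (lt_of_lt_of_le h12 hℓm) (lt_of_lt_of_le h22 hℓm)
        exact this
      exact Prod.ext hq hr'
  -- the agreement bound
  have hagr : ∀ j : Fin m, (n - s) + (s/m)*ℓ ≤ (agr (w j) S).card := by
    intro j
    have hsub : (Finset.univ \ t) ∪ (t.filter (fun i => j ∈ Jset (uidx i))) ⊆ agr (w j) S := by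
      intro i hi
      simp only [agr, Finset.mem_filter, Finset.mem_univ, true_and]
      rcases Finset.mem_union.mp hi with hi | hi
      · have hit : i ∉ t := (Finset.mem_sdiff.mp hi).2
        have h0 : w j i = 0 := hwsupp j i hit
        rw [h0]
        apply hS1
        simp only [Vals, if_neg hit, Finset.mem_singleton]
      · obtain ⟨hit, hJ⟩ := Finset.mem_filter.mp hi
        apply hS1
        simp only [Vals, if_pos hit]
        exact Finset.mem_image_of_mem _ hJ
    have hdisj : Disjoint (Finset.univ \ t) (t.filter (fun i => j ∈ Jset (uidx i))) := by
      refine Finset.disjoint_left.mpr ?_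
      intro i hi hif
      exact (Finset.mem_sdiff.mp hi).2 (Finset.mem_filter.mp hif).1
    calc (n - s) + (s/m)*ℓ ≤ (Finset.univ \ t).card + (t.filter (fun i => j ∈ Jset (uidx i))).card := by
          have : (Finset.univ \ t).card = n - s := by
            rw [Finset.card_sdiff_of_subset (Finset.subset_univ t)]
            simp [hsdef]
          rw [this]
          exact Nat.add_le_add_left (hserve j) _
      _ = ((Finset.univ \ t) ∪ (t.filter (fun i => j ∈ Jset (uidx i)))).card :=
          (Finset.card_union_of_disjoint hdisj).symm
      _ ≤ (agr (w j) S).card := Finset.card_le_card hsub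
  refine ⟨S, hS2, Finset.image w Finset.univ, ?_, ?_, ?_, ?_⟩
  · intro y hy
    simp only [Finset.coe_image, Finset.coe_univ, Set.image_univ, Set.mem_range] at hy
    obtain ⟨j, rfl⟩ := hy
    exact hWC (hwW j)
  · intro y hy
    obtain ⟨j, _, rfl⟩ := Finset.mem_image.mp hy
    have hnum := hagr j
    have hsk : (s:ℝ) + ((k:ℝ) - m) ≤ (n:ℝ) := by
      have h1 : s + (k - m) ≤ n := by simpa using hcard
      have : ((s + (k-m) : ℕ) : ℝ) ≤ (n:ℝ) := by exact_mod_cast h1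
      push_cast [Nat.cast_sub hmk] at this
      linarith
    set sd : ℕ := s / m with hsddef
    have hA : (s:ℝ) ≤ (sd:ℝ) * m + m := by
      have h1 : m * sd + s % m = s := Nat.div_add_mod s m
      have h2 : s % m < m := Nat.mod_lt s hm0
      have h3 : s ≤ m * sd + m := by omega
      have h4 := (Nat.cast_le (α := ℝ)).mpr h3
      push_cast at h4
      linarith [h4]
    have hB : (s:ℝ) ≤ (1-R) * n + m := by
      rw [hk] at hsk; linarith
    have hgoal : ((n - s : ℕ):ℝ) + (sd:ℝ)*ℓ ≤ ((agr (w j) S).card : ℝ) := by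
      exact_mod_cast hnum
    rw [Nat.cast_sub hsn] at hgoal
    have hml : (ℓ:ℝ) ≤ (m:ℝ) := by exact_mod_cast hℓm
    have hm0' : (0:ℝ) < m := by exact_mod_cast hm0
    have key : (m:ℝ) * ((R+ε) * n) ≤ (m:ℝ) * ((n:ℝ) - s + sd*ℓ) := by
      have h1 : (ℓ:ℝ) * s ≤ (ℓ:ℝ) * ((sd:ℝ)*m + m) :=
        mul_le_mul_of_nonneg_left hA (by positivity)
      have h2 : ((m:ℝ) - ℓ) * s ≤ ((m:ℝ) - ℓ) * ((1-R)*n + m) :=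
        mul_le_mul_of_nonneg_left hB (by linarith)
      have h3 : (m:ℝ)*m ≤ ((1-R)*(ℓ:ℝ) - ε*m) * n := hnc
      nlinarith [h1, h2, h3]
    have key2 : (R+ε) * n ≤ (n:ℝ) - s + sd*ℓ :=
      le_of_mul_le_mul_left key hm0'
    have : (1 - (1 - R - ε)) * (n:ℝ) = (R+ε) * n := by ring
    rw [this]
    linarith [key2, hgoal]
  · have hT : ((Finset.image w Finset.univ : Finset (Fin n → F)) : Set (Fin n → F)) = Set.range w := by
      simp
    have h1 := (linearIndepOn_id_range_iff hw.injective).mpr hw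
    rw [← hT] at h1
    exact h1
  · have : (Finset.image w Finset.univ).card = m := by
      rw [Finset.card_image_of_injective _ hw.injective]
      simp
    omega
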